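/- Define, for ρ ∈ [-1,1] with q = √(1-ρ²): K₁(ρ) = (q + ρ·arccos(-ρ))/(2π), K₂(ρ) = (3ρq + arccos(-ρ)(1+2ρ²))/(2π), K₃₁(ρ) = (q(2+ρ²) + 3ρ·arccos(-ρ))/(2π), and σ_r²(ρ) = 2·[ K₁(ρ)²·(4K₂(ρ) + 6) − 8·K₁(ρ)·K₃₁(ρ) + 2·K₂(ρ) ]. Then σ_r²(1) = 0 and lim_{ρ → 1⁻} σ_r²(ρ) / (1-ρ)² = 8. -/

import Mathlib

open Real Filter

/-- Cho–Saul ReLU kernel `K₁(ρ) = (q + ρ arccos(-ρ))/(2π)`, `q = √(1-ρ²)`. -/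
noncomputable def K1 (ρ : ℝ) : ℝ :=
  (Real.sqrt (1 - ρ ^ 2) + ρ * Real.arccos (-ρ)) / (2 * π)

/-- Cho–Saul ReLU kernel `K₂(ρ) = (3ρq + arccos(-ρ)(1+2ρ²))/(2π)`. -/
noncomputable def K2 (ρ : ℝ) : ℝ :=
  (3 * ρ * Real.sqrt (1 - ρ ^ 2) + Real.arccos (-ρ) * (1 + 2 * ρ ^ 2)) / (2 * π)

/-- Mixed Cho–Saul ReLU kernel `K₃₁(ρ) = (q(2+ρ²) + 3ρ arccos(-ρ))/(2π)`. -/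
noncomputable def K31 (ρ : ℝ) : ℝ :=
  (Real.sqrt (1 - ρ ^ 2) * (2 + ρ ^ 2) + 3 * ρ * Real.arccos (-ρ)) / (2 * π)

/-- Fluctuation variance `σ_r²(ρ) = 2[K₁²(4K₂ + 6) − 8K₁K₃₁ + 2K₂]` of the
correlation Markov chain of a He-initialized unshaped ReLU MLP. -/
noncomputable def sigmar2 (ρ : ℝ) : ℝ :=
  2 * (K1 ρ ^ 2 * (4 * K2 ρ + 6) - 8 * K1 ρ * K31 ρ + 2 * K2 ρ)

lemma sinTaylor_lb (x : ℝ) (hx : 0 ≤ x) : x - x ^ 3 / 6 ≤ Real.sin x := by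
  have hf : ∀ y : ℝ, HasDerivAt (fun z : ℝ => Real.sin z - z + z ^ 3 / 6)
      (Real.cos y - 1 + y ^ 2 / 2) y := by
    intro y
    have h := ((Real.hasDerivAt_sin y).sub (hasDerivAt_id y)).add
      ((hasDerivAt_pow 3 y).div_const 6)
    refine h.congr_deriv ?_
    push_cast
    ring
  have hmono : Monotone (fun z : ℝ => Real.sin z - z + z ^ 3 / 6) :=
    monotone_of_deriv_nonneg (fun y => (hf y).differentiableAt)
      (fun y => by
        rw [(hf y).deriv]
        nlinarith [Real.one_sub_sq_div_two_le_cos (x := y)])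
  have h0 := hmono hx
  simp at h0
  linarith

lemma cosTaylor_ub (x : ℝ) (hx : 0 ≤ x) : Real.cos x ≤ 1 - x ^ 2 / 2 + x ^ 4 / 24 := by
  have hf : ∀ y : ℝ, HasDerivAt (fun z : ℝ => 1 - z ^ 2 / 2 + z ^ 4 / 24 - Real.cos z)
      (-y + y ^ 3 / 6 + Real.sin y) y := by
    intro y
    have h := (((hasDerivAt_const y (1:ℝ)).sub ((hasDerivAt_pow 2 y).div_const 2)).add
      ((hasDerivAt_pow 4 y).div_const 24)).sub (Real.hasDerivAt_cos y)
    refine h.congr_deriv ?_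
    push_cast
    ring
  have hmono : MonotoneOn (fun z : ℝ => 1 - z ^ 2 / 2 + z ^ 4 / 24 - Real.cos z) (Set.Ici 0) := by
    apply monotoneOn_of_deriv_nonneg (convex_Ici 0)
      (fun y _ => ((hf y).differentiableAt).continuousAt.continuousWithinAt)
      (fun y _ => ((hf y).differentiableAt).differentiableWithinAt)
    intro y hy
    rw [interior_Ici] at hy
    rw [(hf y).deriv]
    nlinarith [sinTaylor_lb y hy.le]
  have h0 := hmono (Set.self_mem_Ici) hx hx
  simp at h0
  linarith

lemma sinTaylor_ub (x : ℝ) (hx : 0 ≤ x) : Real.sin x ≤ x - x ^ 3 / 6 + x ^ 5 / 120 := by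
  have hf : ∀ y : ℝ, HasDerivAt (fun z : ℝ => z - z ^ 3 / 6 + z ^ 5 / 120 - Real.sin z)
      (1 - y ^ 2 / 2 + y ^ 4 / 24 - Real.cos y) y := by
    intro y
    have h := (((hasDerivAt_id y).sub ((hasDerivAt_pow 3 y).div_const 6)).add
      ((hasDerivAt_pow 5 y).div_const 120)).sub (Real.hasDerivAt_sin y)
    refine h.congr_deriv ?_
    push_cast
    ring
  have hmono : MonotoneOn (fun z : ℝ => z - z ^ 3 / 6 + z ^ 5 / 120 - Real.sin z) (Set.Ici 0) := by
    apply monotoneOn_of_deriv_nonneg (convex_Ici 0)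
      (fun y _ => ((hf y).differentiableAt).continuousAt.continuousWithinAt)
      (fun y _ => ((hf y).differentiableAt).differentiableWithinAt)
    intro y hy
    rw [interior_Ici] at hy
    rw [(hf y).deriv]
    nlinarith [cosTaylor_ub y hy.le]
  have h0 := hmono (Set.self_mem_Ici) hx hx
  simp at h0
  linarith

noncomputable def ff (t : ℝ) : ℝ :=
  4 * π ^ 3 * Real.sin t ^ 4
  + π ^ 2 * (6 * Real.sin t * Real.cos t ^ 3 - 12 * Real.sin t * Real.cos t - 4 * t
      + 22 * t * Real.cos t ^ 2 - 12 * t * Real.cos t ^ 4)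
  + π * (-8 * Real.sin t ^ 4 + 20 * t * Real.sin t ^ 3 * Real.cos t
      - 12 * t ^ 2 * Real.sin t ^ 2 * Real.cos t ^ 2)
  + (6 * Real.sin t ^ 3 * Real.cos t - 2 * t * Real.sin t ^ 2
      - 16 * t * Real.sin t ^ 2 * Real.cos t ^ 2 + 4 * t ^ 2 * Real.sin t * Real.cos t
      + 14 * t ^ 2 * Real.sin t * Real.cos t ^ 3 - 2 * t ^ 3 * Real.cos t ^ 2
      - 4 * t ^ 3 * Real.cos t ^ 4)

lemma scaled_abs {p M X K : ℝ} (hp0 : 0 ≤ p) (hpM : p ≤ M) (hX : |X| ≤ K) :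
    |p * X| ≤ M * K := by
  rw [abs_mul, abs_of_nonneg hp0]
  exact mul_le_mul hpM hX (abs_nonneg X) (hp0.trans hpM)

set_option maxHeartbeats 1000000 in
set_option maxHeartbeats 1000000 in
lemma ff_bound (t : ℝ) (ht0 : 0 < t) (ht1 : t ≤ 1 / 2) :
    |ff t - 4 * π ^ 3 * t ^ 4| ≤ 10000 * t ^ 5 := by
  set d : ℝ := t - Real.sin t with hd_def
  set w : ℝ := 1 - Real.cos t with hw_def
  have hd0 : 0 ≤ d := by
    have := Real.sin_le ht0.le; simp only [hd_def]; linarith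
  have hd1 : d ≤ t ^ 3 / 6 := by
    have := sinTaylor_lb t ht0.le; simp only [hd_def]; linarith
  have hd2 : t ^ 3 / 6 - t ^ 5 / 120 ≤ d := by
    have := sinTaylor_ub t ht0.le; simp only [hd_def]; linarith
  have hw0 : 0 ≤ w := by
    have := Real.cos_le_one t; simp only [hw_def]; linarith
  have hw1 : w ≤ t ^ 2 / 2 := by
    have := Real.one_sub_sq_div_two_le_cos (x := t); simp only [hw_def]; linarith
  have hw2 : t ^ 2 / 2 - t ^ 4 / 24 ≤ w := by
    have := cosTaylor_ub t ht0.le; simp only [hw_def]; linarith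
  have ht3 : (0:ℝ) < t ^ 3 := by positivity
  have ht2 : (0:ℝ) < t ^ 2 := by positivity
  have hdt : d ≤ t ^ 3 := by linarith
  have hwt : w ≤ t ^ 2 := by linarith
  have ht5 : (0:ℝ) ≤ t ^ 5 := by positivity
  have mono : ∀ a b e : ℕ, 5 ≤ a + 3 * b + 2 * e → t ^ a * d ^ b * w ^ e ≤ t ^ 5 := by
    intro a b e h
    calc t ^ a * d ^ b * w ^ e ≤ t ^ a * (t ^ 3) ^ b * (t ^ 2) ^ e := by
          gcongr <;> first | exact hd0 | exact hdt | exact hw0 | exact hwt | positivity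
      _ = t ^ (a + 3 * b + 2 * e) := by
          rw [← pow_mul, ← pow_mul, ← pow_add, ← pow_add]
      _ ≤ t ^ 5 := pow_le_pow_of_le_one ht0.le (by linarith) h
  have nn : ∀ a b e : ℕ, 0 ≤ t ^ a * d ^ b * w ^ e := fun a b e => by positivity
  -- group A
  have hA : |(-4) * (t^3*d^1*w^0) + 6 * (t^2*d^2*w^0) - 4 * (t^1*d^3*w^0) + (t^0*d^4*w^0)|
      ≤ 15 * t ^ 5 := by
    rw [abs_le]
    constructor <;>
      linarith [mono 3 1 0 (by norm_num), mono 2 2 0 (by norm_num), mono 1 3 0 (by norm_num),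
        mono 0 4 0 (by norm_num), nn 3 1 0, nn 2 2 0, nn 1 3 0, nn 0 4 0]
  -- group B (the delicate one)
  have hB : |6 * d - 2 * (t * w)| ≤ t ^ 5 / 12 := by
    have h1 : t * w ≤ t * (t ^ 2 / 2) := mul_le_mul_of_nonneg_left hw1 ht0.le
    have h2 : t * (t ^ 2 / 2 - t ^ 4 / 24) ≤ t * w := mul_le_mul_of_nonneg_left hw2 ht0.le
    rw [abs_le]
    constructor <;> nlinarith
  -- group C
  have hC : |(-32) * (t^1*d^0*w^2) + 6 * (t^0*d^1*w^1) + 42 * (t^1*d^0*w^3)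
      - 18 * (t^0*d^1*w^2) + 6 * (t^0*d^1*w^3) - 12 * (t^1*d^0*w^4)| ≤ 116 * t ^ 5 := by
    rw [abs_le]
    constructor <;>
      linarith [mono 1 0 2 (by norm_num), mono 0 1 1 (by norm_num), mono 1 0 3 (by norm_num),
        mono 0 1 2 (by norm_num), mono 0 1 3 (by norm_num), mono 1 0 4 (by norm_num),
        nn 1 0 2, nn 0 1 1, nn 1 0 3, nn 0 1 2, nn 0 1 3, nn 1 0 4]
  -- group D
  have hD : |(-4) * (t^3*d^1*w^0) + 4 * (t^4*d^0*w^1) + 12 * (t^3*d^1*w^1)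
      - 12 * (t^4*d^0*w^2) + 12 * (t^1*d^3*w^0) - 36 * (t^2*d^2*w^1) + 24 * (t^3*d^1*w^2)
      - 8 * (t^0*d^4*w^0) + 20 * (t^1*d^3*w^1) - 12 * (t^2*d^2*w^2)| ≤ 144 * t ^ 5 := by
    rw [abs_le]
    constructor <;>
      linarith [mono 3 1 0 (by norm_num), mono 4 0 1 (by norm_num), mono 3 1 1 (by norm_num),
        mono 4 0 2 (by norm_num), mono 1 3 0 (by norm_num), mono 2 2 1 (by norm_num),
        mono 3 1 2 (by norm_num), mono 0 4 0 (by norm_num), mono 1 3 1 (by norm_num),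
        mono 2 2 2 (by norm_num),
        nn 3 1 0, nn 4 0 1, nn 3 1 1, nn 4 0 2, nn 1 3 0, nn 2 2 1, nn 3 1 2, nn 0 4 0,
        nn 1 3 1, nn 2 2 2]
  -- group E
  have hE : |14 * (t^1*d^2*w^1) - 6 * (t^0*d^3*w^0) - 10 * (t^2*d^1*w^2) + 2 * (t^3*d^0*w^3)
      + 6 * (t^0*d^3*w^1) - 16 * (t^1*d^2*w^2) + 14 * (t^2*d^1*w^3) - 4 * (t^3*d^0*w^4)|
      ≤ 72 * t ^ 5 := by
    rw [abs_le]
    constructor <;>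
      linarith [mono 1 2 1 (by norm_num), mono 0 3 0 (by norm_num), mono 2 1 2 (by norm_num),
        mono 3 0 3 (by norm_num), mono 0 3 1 (by norm_num), mono 1 2 2 (by norm_num),
        mono 2 1 3 (by norm_num), mono 3 0 4 (by norm_num),
        nn 1 2 1, nn 0 3 0, nn 2 1 2, nn 3 0 3, nn 0 3 1, nn 1 2 2, nn 2 1 3, nn 3 0 4]
  -- assemble
  have hpi0 : (0:ℝ) < π := Real.pi_pos
  have hpi4 : π ≤ 4 := by linarith [Real.pi_le_four]
  have hid : ff t - 4 * π ^ 3 * t ^ 4 =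
      (4 * π ^ 3) * ((-4) * (t^3*d^1*w^0) + 6 * (t^2*d^2*w^0) - 4 * (t^1*d^3*w^0) + (t^0*d^4*w^0))
      + π ^ 2 * (6 * d - 2 * (t * w))
      + π ^ 2 * ((-32) * (t^1*d^0*w^2) + 6 * (t^0*d^1*w^1) + 42 * (t^1*d^0*w^3)
          - 18 * (t^0*d^1*w^2) + 6 * (t^0*d^1*w^3) - 12 * (t^1*d^0*w^4))
      + π * ((-4) * (t^3*d^1*w^0) + 4 * (t^4*d^0*w^1) + 12 * (t^3*d^1*w^1)
          - 12 * (t^4*d^0*w^2) + 12 * (t^1*d^3*w^0) - 36 * (t^2*d^2*w^1) + 24 * (t^3*d^1*w^2)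
          - 8 * (t^0*d^4*w^0) + 20 * (t^1*d^3*w^1) - 12 * (t^2*d^2*w^2))
      + (14 * (t^1*d^2*w^1) - 6 * (t^0*d^3*w^0) - 10 * (t^2*d^1*w^2) + 2 * (t^3*d^0*w^3)
          + 6 * (t^0*d^3*w^1) - 16 * (t^1*d^2*w^2) + 14 * (t^2*d^1*w^3) - 4 * (t^3*d^0*w^4)) := by
    simp only [ff, hd_def, hw_def]
    ring
  rw [hid]
  set A := ((-4) * (t^3*d^1*w^0) + 6 * (t^2*d^2*w^0) - 4 * (t^1*d^3*w^0) + (t^0*d^4*w^0)) with hA_def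
  set B := (6 * d - 2 * (t * w)) with hB_def
  set C := ((-32) * (t^1*d^0*w^2) + 6 * (t^0*d^1*w^1) + 42 * (t^1*d^0*w^3)
      - 18 * (t^0*d^1*w^2) + 6 * (t^0*d^1*w^3) - 12 * (t^1*d^0*w^4)) with hC_def
  set D := ((-4) * (t^3*d^1*w^0) + 4 * (t^4*d^0*w^1) + 12 * (t^3*d^1*w^1)
      - 12 * (t^4*d^0*w^2) + 12 * (t^1*d^3*w^0) - 36 * (t^2*d^2*w^1) + 24 * (t^3*d^1*w^2)
      - 8 * (t^0*d^4*w^0) + 20 * (t^1*d^3*w^1) - 12 * (t^2*d^2*w^2)) with hD_def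
  set E := (14 * (t^1*d^2*w^1) - 6 * (t^0*d^3*w^0) - 10 * (t^2*d^1*w^2) + 2 * (t^3*d^0*w^3)
      + 6 * (t^0*d^3*w^1) - 16 * (t^1*d^2*w^2) + 14 * (t^2*d^1*w^3) - 4 * (t^3*d^0*w^4))
    with hE_def
  have habs : |4 * π ^ 3 * A + π ^ 2 * B + π ^ 2 * C + π * D + E|
      ≤ |4 * π ^ 3 * A| + |π ^ 2 * B| + |π ^ 2 * C| + |π * D| + |E| :=
    calc |4 * π ^ 3 * A + π ^ 2 * B + π ^ 2 * C + π * D + E|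
        ≤ |4 * π ^ 3 * A + π ^ 2 * B + π ^ 2 * C + π * D| + |E| := abs_add_le _ _
      _ ≤ (|4 * π ^ 3 * A + π ^ 2 * B + π ^ 2 * C| + |π * D|) + |E| :=
          add_le_add_left (abs_add_le _ _) _
      _ ≤ ((|4 * π ^ 3 * A + π ^ 2 * B| + |π ^ 2 * C|) + |π * D|) + |E| := by
          gcongr; exact abs_add_le _ _
      _ ≤ (((|4 * π ^ 3 * A| + |π ^ 2 * B|) + |π ^ 2 * C|) + |π * D|) + |E| := by
          gcongr; exact abs_add_le _ _
      _ = |4 * π ^ 3 * A| + |π ^ 2 * B| + |π ^ 2 * C| + |π * D| + |E| := by ring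
  have b1 : |4 * π ^ 3 * A| ≤ 256 * (15 * t ^ 5) :=
    scaled_abs (by positivity) (by nlinarith) hA
  have b2 : |π ^ 2 * B| ≤ 16 * (t ^ 5 / 12) :=
    scaled_abs (by positivity) (by nlinarith) hB
  have b3 : |π ^ 2 * C| ≤ 16 * (116 * t ^ 5) :=
    scaled_abs (by positivity) (by nlinarith) hC
  have b4 : |π * D| ≤ 4 * (144 * t ^ 5) :=
    scaled_abs (by positivity) hpi4 hD
  have b5 : |E| ≤ 72 * t ^ 5 := hE
  linarith


lemma one_sub_cos_pos {t : ℝ} (ht0 : 0 < t) (htπ : t < π) : 0 < 1 - Real.cos t := by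
  have hc : Real.cos t = 2 * Real.cos (t / 2) ^ 2 - 1 := by
    have h2 : 2 * (t / 2) = t := by ring
    have h3 := Real.cos_two_mul (t / 2)
    rw [h2] at h3
    linarith
  have hs : Real.sin (t / 2) ^ 2 + Real.cos (t / 2) ^ 2 = 1 := Real.sin_sq_add_cos_sq _
  have hsp : 0 < Real.sin (t / 2) :=
    Real.sin_pos_of_pos_of_lt_pi (by linarith) (by linarith [Real.pi_pos])
  nlinarith

lemma one_sub_cos_eq {t : ℝ} : 1 - Real.cos t = 2 * Real.sin (t / 2) ^ 2 := by
  have hc : Real.cos t = 2 * Real.cos (t / 2) ^ 2 - 1 := by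
    have h2 : 2 * (t / 2) = t := by ring
    have h3 := Real.cos_two_mul (t / 2)
    rw [h2] at h3
    linarith
  have hs : Real.sin (t / 2) ^ 2 + Real.cos (t / 2) ^ 2 = 1 := Real.sin_sq_add_cos_sq _
  linarith

lemma lim1 : Tendsto (fun t : ℝ => ff t / t ^ 4) (nhdsWithin 0 (Set.Ioi 0))
    (nhds (4 * π ^ 3)) := by
  have key : Tendsto (fun t : ℝ => ff t / t ^ 4 - 4 * π ^ 3) (nhdsWithin 0 (Set.Ioi 0))
      (nhds 0) := by
    apply squeeze_zero_norm' (a := fun t : ℝ => 10000 * t)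
    · filter_upwards [Ioo_mem_nhdsGT_of_mem
        (show (0:ℝ) ∈ Set.Ico (0:ℝ) (1/2) by norm_num)] with t ht
      have ht4 : (0:ℝ) < t ^ 4 := pow_pos ht.1 4
      have heq : ff t / t ^ 4 - 4 * π ^ 3 = (ff t - 4 * π ^ 3 * t ^ 4) / t ^ 4 := by
        rw [sub_div, mul_div_assoc, div_self ht4.ne', mul_one]
      rw [Real.norm_eq_abs, heq, abs_div, abs_of_pos ht4, div_le_iff₀ ht4]
      have h10 : 10000 * t * t ^ 4 = 10000 * t ^ 5 := by ring
      rw [h10]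
      exact ff_bound t ht.1 ht.2.le
    · have h0 : Tendsto (fun t : ℝ => 10000 * t) (nhds 0) (nhds (10000 * 0)) :=
        (tendsto_id (α := ℝ)).const_mul (10000 : ℝ)
      norm_num at h0
      exact h0.mono_left nhdsWithin_le_nhds
  have := key.add_const (4 * π ^ 3)
  simpa using this

lemma lim_sin_div : Tendsto (fun x : ℝ => Real.sin x / x) (nhdsWithin 0 {0}ᶜ) (nhds 1) := by
  have h := Real.hasDerivAt_sin 0
  rw [hasDerivAt_iff_tendsto_slope] at h
  have hh : slope Real.sin 0 = fun x : ℝ => Real.sin x / x := by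
    funext x; simp [slope_def_field]
  rw [hh] at h
  simpa using h

lemma lim2 : Tendsto (fun t : ℝ => t ^ 2 / (1 - Real.cos t)) (nhdsWithin 0 (Set.Ioi 0))
    (nhds 2) := by
  have half : Tendsto (fun t : ℝ => t / 2) (nhdsWithin 0 (Set.Ioi 0))
      (nhdsWithin 0 {0}ᶜ) := by
    rw [tendsto_nhdsWithin_iff]
    constructor
    · have h0 : Tendsto (fun t : ℝ => t / 2) (nhds 0) (nhds ((0:ℝ) / 2)) :=
        (tendsto_id (α := ℝ)).div_const (2:ℝ)
      norm_num at h0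
      exact h0.mono_left nhdsWithin_le_nhds
    · filter_upwards [self_mem_nhdsWithin] with t ht
      simp only [Set.mem_compl_iff, Set.mem_singleton_iff]
      have : (0:ℝ) < t := ht
      positivity
  have hs2 : Tendsto (fun t : ℝ => Real.sin (t / 2) / (t / 2)) (nhdsWithin 0 (Set.Ioi 0))
      (nhds 1) := lim_sin_div.comp half
  have hinv : Tendsto (fun t : ℝ => 2 * ((Real.sin (t / 2) / (t / 2))⁻¹) ^ 2)
      (nhdsWithin 0 (Set.Ioi 0)) (nhds 2) := by
    have := ((hs2.inv₀ one_ne_zero).pow 2).const_mul (2:ℝ)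
    simpa using this
  apply hinv.congr'
  filter_upwards [Ioo_mem_nhdsGT_of_mem
    (show (0:ℝ) ∈ Set.Ico (0:ℝ) π by constructor <;> [rfl; exact Real.pi_pos])] with t ht
  have hsp : 0 < Real.sin (t / 2) :=
    Real.sin_pos_of_pos_of_lt_pi (by linarith [ht.1]) (by linarith [ht.2, Real.pi_pos])
  have ht0 : (0:ℝ) < t := ht.1
  rw [one_sub_cos_eq]
  field_simp

lemma sig_eq {t : ℝ} (ht0 : 0 < t) (htπ : t < π) :
    sigmar2 (Real.cos t) = ff t / (2 * π ^ 3) := by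
  have h1 : Real.sqrt (1 - Real.cos t ^ 2) = Real.sin t :=
    (Real.sin_eq_sqrt_one_sub_cos_sq ht0.le htπ.le).symm
  have h2 : Real.arccos (-Real.cos t) = π - t := by
    rw [Real.arccos_neg, Real.arccos_cos ht0.le htπ.le]
  have hπ : π ≠ 0 := Real.pi_ne_zero
  have hff : ff t = (Real.sin t + Real.cos t * (π - t)) ^ 2
        * (2 * (3 * Real.cos t * Real.sin t + (π - t) * (1 + 2 * Real.cos t ^ 2)) + 6 * π)
      - 8 * π * (Real.sin t + Real.cos t * (π - t))
        * (Real.sin t * (2 + Real.cos t ^ 2) + 3 * Real.cos t * (π - t))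
      + 4 * π ^ 2 * (3 * Real.cos t * Real.sin t + (π - t) * (1 + 2 * Real.cos t ^ 2)) := by
    have hp := Real.sin_sq_add_cos_sq t
    simp only [ff]
    linear_combination (4 * π ^ 3 - 4 * π ^ 3 * Real.cos t ^ 2 - 8 * π * Real.sin t ^ 2
      + 4 * π ^ 3 * Real.sin t ^ 2 + 20 * π * t * Real.sin t * Real.cos t
      - 12 * π * t ^ 2 * Real.cos t ^ 2) * hp
  simp only [sigmar2, K1, K2, K31, h1, h2, hff]
  field_simp
  ring

lemma part1 : sigmar2 1 = 0 := by
  have h1 : Real.sqrt (1 - (1:ℝ) ^ 2) = 0 := by norm_num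
  have h2 : Real.arccos (-(1:ℝ)) = π := Real.arccos_neg_one
  have hπ : π ≠ 0 := Real.pi_ne_zero
  simp only [sigmar2, K1, K2, K31, h1, h2]
  field_simp
  ring

lemma inner_lim : Tendsto (fun t : ℝ => sigmar2 (Real.cos t) / (1 - Real.cos t) ^ 2)
    (nhdsWithin 0 (Set.Ioi 0)) (nhds 8) := by
  have hπ : (0:ℝ) < π := Real.pi_pos
  have hcomb : Tendsto (fun t : ℝ => (ff t / t ^ 4) * (t ^ 2 / (1 - Real.cos t)) ^ 2 / (2 * π ^ 3))
      (nhdsWithin 0 (Set.Ioi 0)) (nhds ((4 * π ^ 3) * 2 ^ 2 / (2 * π ^ 3))) :=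
    (lim1.mul (lim2.pow 2)).div_const _
  have hval : (4 * π ^ 3) * 2 ^ 2 / (2 * π ^ 3) = (8:ℝ) := by
    rw [div_eq_iff (by positivity : (2:ℝ) * π ^ 3 ≠ 0)]
    ring
  rw [hval] at hcomb
  apply hcomb.congr'
  filter_upwards [Ioo_mem_nhdsGT_of_mem
    (show (0:ℝ) ∈ Set.Ico (0:ℝ) π by exact ⟨le_refl 0, hπ⟩)] with t ht
  have ht0 : (0:ℝ) < t := ht.1
  have hc : 0 < 1 - Real.cos t := one_sub_cos_pos ht.1 ht.2
  rw [sig_eq ht.1 ht.2]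
  field_simp

/-- `σ_r²(1) = 0` and `σ_r²(ρ)/(1-ρ)² → 8` as `ρ → 1⁻`. -/
theorem sigmar2_expansion_leading :
    sigmar2 1 = 0 ∧
    Tendsto (fun ρ : ℝ => sigmar2 ρ / (1 - ρ) ^ 2) (nhdsWithin 1 (Set.Iio 1))
      (nhds 8) := by
  refine ⟨part1, ?_⟩
  have harc : Tendsto Real.arccos (nhdsWithin 1 (Set.Iio 1)) (nhdsWithin 0 (Set.Ioi 0)) := by
    rw [tendsto_nhdsWithin_iff]
    constructor
    · have h := (Real.continuous_arccos.tendsto 1).mono_left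
        (nhdsWithin_le_nhds (s := Set.Iio (1:ℝ)))
      rwa [Real.arccos_one] at h
    · filter_upwards [self_mem_nhdsWithin] with ρ hρ
      exact Real.arccos_pos.2 hρ
  have hcomp := inner_lim.comp harc
  apply hcomp.congr'
  filter_upwards [Ioo_mem_nhdsLT_of_mem
    (show (1:ℝ) ∈ Set.Ioc (-1:ℝ) 1 by norm_num)] with ρ hρ
  have hco : Real.cos (Real.arccos ρ) = ρ := Real.cos_arccos (by linarith [hρ.1]) hρ.2.le
  simp only [Function.comp_apply, hco]
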